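/- arXiv:math/0509475 — 10 statements merged into one kernel-verified Lean document; each statement's English description precedes it below -/
import Mathlib

section
/- Let R be a commutative ring, P a finite subset of R, and P_0,...,P_r subsets of P such that (i) the union of the P_l equals P; (ii) P_0 has exactly one element; (iii) for any two distinct elements p, p'' of P_l (0 < l ≤ r) there exist l' < l and an element p' ∈ P_{l'} such that (p·p'')^m lies in the ideal (p') for some positive integer m. For each l set q_l = Σ_{p ∈ P_l} p^{e(p)} for arbitrary integers e(p) ≥ 1. Then the radical of the ideal generated by P equals the radical of the ideal (q_0,...,q_r). -/
/-- Schmitt–Vogel lemma: if `P` is a finite subset of a commutative ring `R`,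
covered by subsets `P 0, ..., P r` such that `P 0` is a singleton and any two
distinct elements `p, p''` of `P l` (for `0 < l`) admit `l' < l` and `p' ∈ P l'`
with `(p * p'')^m ∈ (p')` for some `m ≥ 1`, then for any choice of exponents
`e ≥ 1`, setting `q l = ∑_{p ∈ P l} p ^ e p`, the radical of the ideal generated
by `P` equals the radical of `(q 0, ..., q r)`. -/
theorem schmitt_vogel {R : Type*} [CommRing R] [DecidableEq R] (r : ℕ) (P : Finset R)
    (Pl : Fin (r + 1) → Finset R)
    (hcover : (Finset.univ.biUnion Pl) = P)
    (hsub : ∀ l, Pl l ⊆ P)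
    (hP0 : (Pl 0).card = 1)
    (hiii : ∀ l : Fin (r + 1), 0 < l → ∀ p ∈ Pl l, ∀ p'' ∈ Pl l, p ≠ p'' →
      ∃ l' : Fin (r + 1), l' < l ∧ ∃ p' ∈ Pl l', ∃ m : ℕ, 0 < m ∧
        (p * p'') ^ m ∈ Ideal.span ({p'} : Set R))
    (e : R → ℕ) (he : ∀ p ∈ P, 1 ≤ e p)
    (q : Fin (r + 1) → R) (hq : ∀ l, q l = ∑ p ∈ Pl l, p ^ e p) :
    (Ideal.span (P : Set R)).radical = (Ideal.span (Set.range q)).radical := by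
  set I := Ideal.span (Set.range q) with hI
  -- every element of P lies in the radical of I, by strong induction on l
  have key : ∀ n : ℕ, ∀ l : Fin (r + 1), (l : ℕ) = n → ∀ p ∈ Pl l, p ∈ I.radical := by
    intro n
    induction n using Nat.strong_induction_on with
    | _ n ih =>
      intro l hl p hp
      have hqlI : q l ∈ I := Ideal.subset_span ⟨l, rfl⟩
      -- cross terms are in the radical
      have hcross : ∀ p'' ∈ (Pl l).erase p, p * p'' ^ e p'' ∈ I.radical := by
        intro p'' hp''
        have hne : p'' ≠ p := Finset.ne_of_mem_erase hp''
        have hp''l : p'' ∈ Pl l := Finset.mem_of_mem_erase hp''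
        have hlpos : 0 < l := Fin.pos_iff_ne_zero.mpr (by
          rintro rfl
          exact hne (Finset.card_le_one.mp (le_of_eq hP0) p'' hp''l p hp))
        obtain ⟨l', hl', p', hp', m, hm, hpow⟩ := hiii l hlpos p hp p'' hp''l (Ne.symm hne)
        have hp'rad : p' ∈ I.radical := ih l' (hl ▸ hl') l' rfl p' hp'
        have hspan : Ideal.span ({p'} : Set R) ≤ I.radical :=
          (Ideal.span_singleton_le_iff_mem _).mpr hp'rad
        have h1 : (p * p'') ^ m ∈ I.radical := hspan hpow
        have h2 : p * p'' ∈ I.radical := Ideal.mem_radical_of_pow_mem h1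
        have he'' : 1 ≤ e p'' := he p'' (hsub l hp''l)
        have : p * p'' ^ e p'' = (p * p'') * p'' ^ (e p'' - 1) := by
          rw [mul_assoc, ← pow_succ']
          congr 2
          omega
        rw [this]
        exact Ideal.mul_mem_right _ _ h2
      -- p ^ (e p + 1) ∈ radical
      have hsum : p * q l = p ^ (e p + 1) + ∑ p'' ∈ (Pl l).erase p, p * p'' ^ e p'' := by
        rw [hq, Finset.mul_sum, ← Finset.add_sum_erase _ _ hp, ← pow_succ']
      have hppow : p ^ (e p + 1) ∈ I.radical := by
        have h1 : p * q l ∈ I.radical := Ideal.mul_mem_left _ _ (Ideal.le_radical hqlI)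
        have h2 : ∑ p'' ∈ (Pl l).erase p, p * p'' ^ e p'' ∈ I.radical :=
          Ideal.sum_mem _ fun p'' hp'' => hcross p'' hp''
        have := Ideal.sub_mem _ h1 h2
        rwa [hsum, add_sub_cancel_right] at this
      exact Ideal.mem_radical_of_pow_mem hppow
  have keyP : ∀ p ∈ P, p ∈ I.radical := by
    intro p hp
    rw [← hcover, Finset.mem_biUnion] at hp
    obtain ⟨l, -, hpl⟩ := hp
    exact key l l rfl p hpl
  apply le_antisymm
  · -- span P ≤ radical I
    have h1 : Ideal.span (P : Set R) ≤ I.radical := by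
      rw [Ideal.span_le]
      intro p hp
      exact keyP p hp
    calc (Ideal.span (P : Set R)).radical ≤ I.radical.radical := Ideal.radical_mono h1
      _ = I.radical := Ideal.radical_idem _
  · -- I ≤ span P
    apply Ideal.radical_mono
    rw [Ideal.span_le]
    rintro _ ⟨l, rfl⟩
    rw [hq]
    apply Ideal.sum_mem
    intro p hp
    have hpP : p ∈ Ideal.span (P : Set R) := Ideal.subset_span (hsub l hp)
    have he1 : 1 ≤ e p := he p (hsub l hp)
    have : p ^ e p = p ^ (e p - 1) * p := by rw [← pow_succ]; congr 1; omega
    rw [this]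
    exact Ideal.mul_mem_left _ _ hpP
end

section
/- In the polynomial ring K[X_1,...,X_5] over a field K, let J = (X_1X_4 - X_2X_3, X_1X_5, X_3X_5), and let P_1 = (X_1X_4 - X_2X_3)X_2 + X_1X_5 and P_2 = (X_1X_4 - X_2X_3)X_4 + X_3X_5. Then J = √(P_1, P_2), i.e., J is a set-theoretic complete intersection on P_1 and P_2. -/
open MvPolynomial

private lemma sub_mem_of_fix {n : ℕ} {K : Type*} [CommRing K]
    (I : Ideal (MvPolynomial (Fin n) K))
    (σ : MvPolynomial (Fin n) K →ₐ[K] MvPolynomial (Fin n) K)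
    (h : ∀ i, X i - σ (X i) ∈ I) (p : MvPolynomial (Fin n) K) : p - σ p ∈ I := by
  have key : (Ideal.Quotient.mkₐ K I) = (Ideal.Quotient.mkₐ K I).comp σ := by
    apply MvPolynomial.algHom_ext
    intro i
    simpa [Ideal.Quotient.mkₐ_eq_mk] using Ideal.Quotient.eq.mpr (h i)
  have := DFunLike.congr_fun key p
  simp only [Ideal.Quotient.mkₐ_eq_mk, AlgHom.comp_apply] at this
  exact Ideal.Quotient.eq.mp this

private lemma primeX2 (K : Type*) [Field K] : Prime (X 2 : MvPolynomial (Fin 3) K) := by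
  rw [← Ideal.span_singleton_prime (MvPolynomial.X_ne_zero _)]
  set π : MvPolynomial (Fin 3) K →ₐ[K] MvPolynomial (Fin 2) K :=
    aeval ![X 0, X 1, 0] with hπ
  have hker : Ideal.span {(X 2 : MvPolynomial (Fin 3) K)}
      = RingHom.ker (π : MvPolynomial (Fin 3) K →+* MvPolynomial (Fin 2) K) := by
    apply le_antisymm
    · rw [Ideal.span_le]
      rintro q rfl
      simp [RingHom.mem_ker, hπ]
    · intro p hp
      rw [RingHom.mem_ker] at hp
      have key := sub_mem_of_fix (Ideal.span {(X 2 : MvPolynomial (Fin 3) K)}) ((rename (![0,1] : Fin 2 → Fin 3)).comp π) ?_ p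
      · have : (rename (![0,1] : Fin 2 → Fin 3)).comp π p = 0 := by
          simp [AlgHom.comp_apply, show π p = 0 from hp]
        rwa [this, sub_zero] at key
      · intro i
        fin_cases i <;> simp [hπ]
  rw [hker]
  exact RingHom.ker_isPrime _

private lemma irred_h (K : Type*) [Field K] :
    Irreducible (Polynomial.C (X 2 : MvPolynomial (Fin 3) K) * Polynomial.X
      + Polynomial.C (-(X 0 * X 1))) := by
  set a : MvPolynomial (Fin 3) K := X 2 with ha
  set b : MvPolynomial (Fin 3) K := -(X 0 * X 1) with hb
  set h : Polynomial (MvPolynomial (Fin 3) K) := Polynomial.C a * Polynomial.X + Polynomial.C b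
    with hh
  have hane : a ≠ 0 := MvPolynomial.X_ne_zero _
  have hdeg : h.natDegree = 1 := Polynomial.natDegree_linear hane
  have h0 : h ≠ 0 := fun hz => by simp [hz] at hdeg
  -- primitivity
  have prim : ∀ c : MvPolynomial (Fin 3) K, Polynomial.C c ∣ h → IsUnit c := by
    intro c hc
    rw [Polynomial.C_dvd_iff_dvd_coeff] at hc
    have hc1 : c ∣ a := by simpa [hh, Polynomial.coeff_C] using hc 1
    have hc0 : c ∣ (X 0 * X 1 : MvPolynomial (Fin 3) K) := by
      have := hc 0
      simp only [hh, Polynomial.coeff_add, Polynomial.coeff_C_mul, Polynomial.coeff_X_zero,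
        mul_zero, Polynomial.coeff_C, if_pos rfl, zero_add] at this
      exact (dvd_neg.mp this)
    obtain ⟨d, hd⟩ := hc1
    rcases (primeX2 K).irreducible.isUnit_or_isUnit hd with hu | hu
    · exact hu
    · exfalso
      have hXc : (X 2 : MvPolynomial (Fin 3) K) ∣ c := by
        obtain ⟨u, rfl⟩ := hu
        exact ⟨↑u⁻¹, by rw [← ha, hd]; simp [mul_assoc]⟩
      have hX01 : (X 2 : MvPolynomial (Fin 3) K) ∣ X 0 * X 1 := hXc.trans hc0
      have ev : ∀ p : MvPolynomial (Fin 3) K, (X 2 : MvPolynomial (Fin 3) K) ∣ p →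
          aeval (![1,1,0] : Fin 3 → K) p = 0 := by
        rintro p ⟨t, rfl⟩
        simp
      rcases (primeX2 K).2.2 _ _ hX01 with hv | hv <;>
        simpa using ev _ hv
  constructor
  · intro hu
    have := Polynomial.natDegree_eq_zero_of_isUnit hu
    omega
  · intro q r hqr
    have hq0 : q ≠ 0 := fun hz => h0 (by rw [hqr, hz, zero_mul])
    have hr0 : r ≠ 0 := fun hz => h0 (by rw [hqr, hz, mul_zero])
    have hsum : q.natDegree + r.natDegree = 1 := by
      rw [← Polynomial.natDegree_mul hq0 hr0, ← hqr, hdeg]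
    rcases Nat.eq_zero_or_pos q.natDegree with hq | hq
    · left
      obtain ⟨c, rfl⟩ := Polynomial.natDegree_eq_zero.mp hq
      exact Polynomial.isUnit_C.mpr (prim c ⟨r, hqr⟩)
    · right
      have hr : r.natDegree = 0 := by omega
      obtain ⟨c, rfl⟩ := Polynomial.natDegree_eq_zero.mp hr
      exact Polynomial.isUnit_C.mpr (prim c ⟨q, by rw [hqr, mul_comm]⟩)

private lemma primeQ2 (K : Type*) [Field K] :
    (Ideal.span ({X 0, X 2} : Set (MvPolynomial (Fin 5) K))).IsPrime := by
  set Q : Ideal (MvPolynomial (Fin 5) K) := Ideal.span {X 0, X 2} with hQ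
  have h02 : (X 0 : MvPolynomial (Fin 5) K) ∈ Q ∧ (X 2 : MvPolynomial (Fin 5) K) ∈ Q :=
    ⟨Ideal.subset_span (by simp), Ideal.subset_span (by simp)⟩
  set π : MvPolynomial (Fin 5) K →ₐ[K] MvPolynomial (Fin 3) K :=
    aeval ![0, X 0, 0, X 1, X 2] with hπ
  have hker : Q = RingHom.ker (π : MvPolynomial (Fin 5) K →+* MvPolynomial (Fin 3) K) := by
    apply le_antisymm
    · rw [hQ, Ideal.span_le]
      rintro q (rfl | rfl) <;> simp [RingHom.mem_ker, hπ]
    · intro p hp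
      rw [RingHom.mem_ker] at hp
      have key := sub_mem_of_fix Q ((rename (![1,3,4] : Fin 3 → Fin 5)).comp π) ?_ p
      · have : (rename (![1,3,4] : Fin 3 → Fin 5)).comp π p = 0 := by
          simp [AlgHom.comp_apply, show π p = 0 from hp]
        rwa [this, sub_zero] at key
      · intro i
        fin_cases i <;>
            simp [hπ, Matrix.cons_val_zero, Matrix.cons_val_one] <;>
          first
            | exact h02.1
            | exact h02.2
  rw [hker]
  exact RingHom.ker_isPrime _

private lemma primeQ1 (K : Type*) [Field K] :
    (Ideal.span ({X 0 * X 3 - X 1 * X 2, X 4} : Set (MvPolynomial (Fin 5) K))).IsPrime := by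
  set g : MvPolynomial (Fin 4) K := X 0 * X 3 - X 1 * X 2 with hg
  set h : Polynomial (MvPolynomial (Fin 3) K) :=
    Polynomial.C (X 2) * Polynomial.X + Polynomial.C (-(X 0 * X 1)) with hh
  have hprime : Prime h := (UniqueFactorizationMonoid.irreducible_iff_prime).mp (irred_h K)
  have hspan : (Ideal.span {h}).IsPrime :=
    (Ideal.span_singleton_prime hprime.ne_zero).mpr hprime
  haveI := hspan
  haveI : IsDomain (Polynomial (MvPolynomial (Fin 3) K) ⧸ Ideal.span {h}) :=
    Ideal.Quotient.isDomain _
  set e := (finSuccEquiv K 3 : MvPolynomial (Fin 4) K ≃ₐ[K] Polynomial (MvPolynomial (Fin 3) K))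
    with he
  have heg : e g = h := by
    have e1 : (1 : Fin 4) = Fin.succ 0 := rfl
    have e2 : (2 : Fin 4) = Fin.succ 1 := rfl
    have e3 : (3 : Fin 4) = Fin.succ 2 := rfl
    rw [hg, he, map_sub, map_mul, map_mul, e1, e2, e3, finSuccEquiv_X_zero, finSuccEquiv_X_succ,
      finSuccEquiv_X_succ, finSuccEquiv_X_succ, hh, map_neg, map_mul]
    ring
  set π : MvPolynomial (Fin 5) K →ₐ[K] MvPolynomial (Fin 4) K :=
    aeval ![X 0, X 1, X 2, X 3, 0] with hπ
  set Φ : MvPolynomial (Fin 5) K →+* Polynomial (MvPolynomial (Fin 3) K) ⧸ Ideal.span {h} :=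
    (Ideal.Quotient.mk (Ideal.span {h})).comp
      ((e : MvPolynomial (Fin 4) K →+* Polynomial (MvPolynomial (Fin 3) K)).comp
        (π : MvPolynomial (Fin 5) K →+* MvPolynomial (Fin 4) K)) with hΦ
  set Q : Ideal (MvPolynomial (Fin 5) K) := Ideal.span {X 0 * X 3 - X 1 * X 2, X 4} with hQ
  have hπf : π (X 0 * X 3 - X 1 * X 2 : MvPolynomial (Fin 5) K) = g := by
    rw [map_sub, map_mul, map_mul, hπ, hg]; simp
  have hker : Q = RingHom.ker Φ := by
    apply le_antisymm
    · rw [hQ, Ideal.span_le]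
      rintro q (rfl | rfl)
      · show (Ideal.Quotient.mk (Ideal.span {h})) (e (π (X 0 * X 3 - X 1 * X 2))) = 0
        rw [hπf, heg, Ideal.Quotient.eq_zero_iff_mem]
        exact Ideal.subset_span rfl
      · show (Ideal.Quotient.mk (Ideal.span {h})) (e (π (X 4))) = 0
        have : π (X 4 : MvPolynomial (Fin 5) K) = 0 := by rw [hπ]; simp
        rw [this, map_zero, map_zero]
    · intro p hp
      rw [RingHom.mem_ker, hΦ, RingHom.comp_apply, Ideal.Quotient.eq_zero_iff_mem,
        Ideal.mem_span_singleton] at hp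
      -- h ∣ e (π p), hence g ∣ π p
      have hgdvd : g ∣ π p := by
        obtain ⟨c, hc⟩ := hp
        refine ⟨e.symm c, e.injective ?_⟩
        rw [map_mul, heg]
        simpa [mul_comm] using hc
      obtain ⟨c, hc⟩ := hgdvd
      set σ : MvPolynomial (Fin 5) K →ₐ[K] MvPolynomial (Fin 5) K :=
        (rename (Fin.castSucc : Fin 4 → Fin 5)).comp π with hσ
      have key := sub_mem_of_fix Q σ ?_ p
      · have hσp : σ p ∈ Q := by
          have : σ p = (rename (Fin.castSucc : Fin 4 → Fin 5)) g
              * (rename (Fin.castSucc : Fin 4 → Fin 5)) c := by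
            rw [hσ, AlgHom.comp_apply, hc, map_mul]
          rw [this]
          have hrg : (rename (Fin.castSucc : Fin 4 → Fin 5)) g
              = (X 0 * X 3 - X 1 * X 2 : MvPolynomial (Fin 5) K) := by
            rw [hg, map_sub, map_mul, map_mul]
            simp only [rename_X]
            norm_num [show Fin.castSucc (0 : Fin 4) = (0 : Fin 5) from rfl,
              show Fin.castSucc (1 : Fin 4) = (1 : Fin 5) from rfl,
              show Fin.castSucc (2 : Fin 4) = (2 : Fin 5) from rfl,
              show Fin.castSucc (3 : Fin 4) = (3 : Fin 5) from rfl]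
          rw [hrg]
          exact Ideal.mul_mem_right _ _ (Ideal.subset_span (by simp))
        have := Q.add_mem key hσp
        simpa using this
      · intro i
        have h4 : (X 4 : MvPolynomial (Fin 5) K) ∈ Q := Ideal.subset_span (by simp)
        have hc0 : Fin.castSucc (0 : Fin 4) = (0 : Fin 5) := rfl
        have hc1 : Fin.castSucc (1 : Fin 4) = (1 : Fin 5) := rfl
        have hc2 : Fin.castSucc (2 : Fin 4) = (2 : Fin 5) := rfl
        have hc3 : Fin.castSucc (3 : Fin 4) = (3 : Fin 5) := rfl
        fin_cases i
        · show X (0 : Fin 5) - σ (X 0) ∈ Q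
          simp [hσ, hπ, hc0]
        · show X (1 : Fin 5) - σ (X 1) ∈ Q
          simp [hσ, hπ, hc1]
        · show X (2 : Fin 5) - σ (X 2) ∈ Q
          simp [hσ, hπ, hc2]
        · show X (3 : Fin 5) - σ (X 3) ∈ Q
          simp [hσ, hπ, hc3]
        · show X (4 : Fin 5) - σ (X 4) ∈ Q
          simpa [hσ, hπ] using h4
  rw [hker]
  exact RingHom.ker_isPrime _

/-- The ideal `J = (X₁X₄ - X₂X₃, X₁X₅, X₃X₅)` in `K[X₁,...,X₅]` is a set-theoretic
complete intersection on `P₁ = (X₁X₄ - X₂X₃)X₂ + X₁X₅` and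
`P₂ = (X₁X₄ - X₂X₃)X₄ + X₃X₅`, i.e. `J = √(P₁, P₂)`. -/
theorem stci_example4 (K : Type*) [Field K] :
    (Ideal.span ({X 0 * X 3 - X 1 * X 2, X 0 * X 4, X 2 * X 4} :
        Set (MvPolynomial (Fin 5) K))) =
      (Ideal.span ({(X 0 * X 3 - X 1 * X 2) * X 1 + X 0 * X 4,
        (X 0 * X 3 - X 1 * X 2) * X 3 + X 2 * X 4} :
          Set (MvPolynomial (Fin 5) K))).radical := by
  set R := MvPolynomial (Fin 5) K
  set f : R := X 0 * X 3 - X 1 * X 2 with hf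
  set I : Ideal R := Ideal.span {f * X 1 + X 0 * X 4, f * X 3 + X 2 * X 4} with hI
  set Q1 : Ideal R := Ideal.span {f, X 4} with hQ1'
  set Q2 : Ideal R := Ideal.span {X 0, X 2} with hQ2'
  have hQ1 : Q1.IsPrime := primeQ1 K
  have hQ2 : Q2.IsPrime := primeQ2 K
  have hP1 : f * X 1 + X 0 * X 4 ∈ I := Ideal.subset_span (by simp)
  have hP2 : f * X 3 + X 2 * X 4 ∈ I := Ideal.subset_span (by simp)
  apply le_antisymm
  · -- J ≤ I.radical
    have hfrad : f ∈ I.radical := by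
      rw [Ideal.mem_radical_iff]
      refine ⟨3, ?_⟩
      rw [hI, Ideal.mem_span_pair]
      exact ⟨-(X 2 * f), X 0 * f, by rw [hf]; ring⟩
    rw [Ideal.span_le]
    rintro q (rfl | rfl | rfl)
    · exact hfrad
    · have he : X 0 * X 4 = (f * X 1 + X 0 * X 4) - f * X 1 := by ring
      rw [he]
      exact sub_mem (Ideal.le_radical hP1) (Ideal.mul_mem_right _ _ hfrad)
    · have he : X 2 * X 4 = (f * X 3 + X 2 * X 4) - f * X 3 := by ring
      rw [he]
      exact sub_mem (Ideal.le_radical hP2) (Ideal.mul_mem_right _ _ hfrad)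
  · -- I.radical ≤ J
    have hIQ1 : I ≤ Q1 := by
      rw [hI, Ideal.span_le]
      rintro q (rfl | rfl) <;> rw [SetLike.mem_coe, hQ1', Ideal.mem_span_pair]
      · exact ⟨X 1, X 0, by ring⟩
      · exact ⟨X 3, X 2, by ring⟩
    have hIQ2 : I ≤ Q2 := by
      rw [hI, Ideal.span_le]
      rintro q (rfl | rfl) <;> rw [SetLike.mem_coe, hQ2', Ideal.mem_span_pair]
      · exact ⟨X 1 * X 3 + X 4, -(X 1 * X 1), by rw [hf]; ring⟩
      · exact ⟨X 3 * X 3, X 4 - X 1 * X 3, by rw [hf]; ring⟩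
    have hr1 : I.radical ≤ Q1 := hQ1.radical_le_iff.mpr hIQ1
    have hr2 : I.radical ≤ Q2 := hQ2.radical_le_iff.mpr hIQ2
    intro p hp
    obtain ⟨c₁, c₂, hc⟩ := Ideal.mem_span_pair.mp (hr1 hp)
    have hpQ2 : p ∈ Q2 := hr2 hp
    have hfQ2 : f ∈ Q2 := by
      rw [hQ2', Ideal.mem_span_pair]
      exact ⟨X 3, -(X 1), by rw [hf]; ring⟩
    have hx4 : (X 4 : R) ∉ Q2 := by
      intro hx
      rw [hQ2', Ideal.mem_span_pair] at hx
      obtain ⟨a, b, hab⟩ := hx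
      have := congrArg (aeval (![0,0,0,0,1] : Fin 5 → K)) hab
      simp at this
    have hc2Q2 : c₂ * X 4 ∈ Q2 := by
      have he : c₂ * X 4 = p - c₁ * f := by rw [← hc]; ring
      rw [he]
      exact sub_mem hpQ2 (Ideal.mul_mem_left _ _ hfQ2)
    rcases hQ2.mem_or_mem hc2Q2 with hm | hm
    · obtain ⟨d₁, d₂, hd⟩ := Ideal.mem_span_pair.mp hm
      have hpJ : p = c₁ * f + (d₁ * (X 0 * X 4) + d₂ * (X 2 * X 4)) := by
        rw [← hc, ← hd]; ring
      rw [hpJ]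
      refine add_mem (Ideal.mul_mem_left _ _ (Ideal.subset_span (by simp)))
        (add_mem (Ideal.mul_mem_left _ _ (Ideal.subset_span (by simp)))
          (Ideal.mul_mem_left _ _ (Ideal.subset_span (by simp))))
    · exact absurd hm hx4
end

section
/- In the polynomial ring K[T_1,...,T_6] over a field K, let J = (T_3T_5 - T_4^2, T_1T_4, T_1T_5, T_1T_6, T_3T_6, T_4T_6), and let F_1 = T_3T_5 - T_4^2, G_1 = T_1T_5 + T_3T_6, G_2 = T_1T_6. Then J = √(F_1, G_1, G_2). -/
open MvPolynomial

namespace FiberConeAux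

variable {K : Type*} [Field K] {n : ℕ}

/-- Substitution congruence: if `X i - ρ i ∈ I` for all `i`, then `f ≡ aeval ρ f (mod I)`. -/
lemma sub_aeval_mem (ρ : Fin n → MvPolynomial (Fin n) K) (I : Ideal (MvPolynomial (Fin n) K))
    (h : ∀ i, X i - ρ i ∈ I) (f : MvPolynomial (Fin n) K) : f - aeval ρ f ∈ I := by
  have key : (Ideal.Quotient.mk I).comp (aeval ρ : MvPolynomial (Fin n) K →ₐ[K] _).toRingHom
      = (Ideal.Quotient.mk I) := by
    apply MvPolynomial.ringHom_ext
    · intro a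
      simp [aeval_C, algebraMap_eq]
    · intro i
      simp only [RingHom.comp_apply, AlgHom.toRingHom_eq_coe, RingHom.coe_coe, aeval_X]
      exact Ideal.Quotient.eq.mpr (by simpa using I.neg_mem (h i))
  have := congrArg (fun g : _ →+* _ => g f) key
  simp only [RingHom.comp_apply, AlgHom.toRingHom_eq_coe, RingHom.coe_coe] at this
  exact Ideal.Quotient.eq.mp this.symm

lemma span_eq_ker (ρ : Fin n → MvPolynomial (Fin n) K) (S : Set (MvPolynomial (Fin n) K))
    (hS : ∀ g ∈ S, aeval ρ g = 0) (hX : ∀ i, X i - ρ i ∈ Ideal.span S) :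
    Ideal.span S = RingHom.ker (aeval ρ : MvPolynomial (Fin n) K →ₐ[K] _).toRingHom := by
  apply le_antisymm
  · rw [Ideal.span_le]
    intro g hg
    simpa [RingHom.mem_ker] using hS g hg
  · intro f hf
    have h1 := sub_aeval_mem ρ (Ideal.span S) hX f
    rw [RingHom.mem_ker] at hf
    simp only [AlgHom.toRingHom_eq_coe, RingHom.coe_coe] at hf
    rwa [hf, sub_zero] at h1

lemma isPrime_of_ker (ρ : Fin n → MvPolynomial (Fin n) K) (S : Set (MvPolynomial (Fin n) K))
    (hS : ∀ g ∈ S, aeval ρ g = 0) (hX : ∀ i, X i - ρ i ∈ Ideal.span S) :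
    (Ideal.span S).IsPrime := by
  rw [span_eq_ker ρ S hS hX]
  exact RingHom.ker_isPrime _

lemma not_mem_of_ker (ρ : Fin n → MvPolynomial (Fin n) K) (S : Set (MvPolynomial (Fin n) K))
    (hS : ∀ g ∈ S, aeval ρ g = 0) (hX : ∀ i, X i - ρ i ∈ Ideal.span S)
    {x : MvPolynomial (Fin n) K} (hx : aeval ρ x ≠ 0) : x ∉ Ideal.span S := by
  rw [span_eq_ker ρ S hS hX]
  simpa [RingHom.mem_ker] using hx

lemma aeval_mem_span (ρ : Fin n → MvPolynomial (Fin n) K) {S : Set (MvPolynomial (Fin n) K)}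
    {T : Ideal (MvPolynomial (Fin n) K)} (h : ∀ g ∈ S, aeval ρ g ∈ T)
    {f : MvPolynomial (Fin n) K} (hf : f ∈ Ideal.span S) : aeval ρ f ∈ T := by
  have hle : Ideal.span S ≤ T.comap (aeval ρ : MvPolynomial (Fin n) K →ₐ[K] _).toRingHom :=
    Ideal.span_le.mpr fun g hg => by simpa [Ideal.mem_comap] using h g hg
  simpa [Ideal.mem_comap] using hle hf

lemma mul_mem_of_span {x : MvPolynomial (Fin n) K} {S : Set (MvPolynomial (Fin n) K)}
    {J : Ideal (MvPolynomial (Fin n) K)} (h : ∀ g ∈ S, x * g ∈ J)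
    {B : MvPolynomial (Fin n) K} (hB : B ∈ Ideal.span S) : x * B ∈ J := by
  refine Submodule.span_induction (fun g hg => h g hg) (by simp) ?_ ?_ hB
  · intro a b _ _ ha hb
    rw [mul_add]; exact J.add_mem ha hb
  · intro a b _ hb
    rw [smul_eq_mul, mul_left_comm]
    exact J.mul_mem_left a hb

lemma X_not_dvd_X {i j : Fin n} (h : i ≠ j) : ¬ (X i ∣ (X j : MvPolynomial (Fin n) K)) := by
  rintro ⟨c, hc⟩
  have := congrArg (aeval (fun k => if k = i then 0 else X k) :
    MvPolynomial (Fin n) K →ₐ[K] MvPolynomial (Fin n) K) hc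
  simp only [map_mul, aeval_X] at this
  rw [if_neg h.symm, if_true, zero_mul] at this
  exact X_ne_zero j this

lemma prime_X' (i : Fin n) : Prime (X i : MvPolynomial (Fin n) K) := by
  rw [← Ideal.span_singleton_prime (X_ne_zero i)]
  apply isPrime_of_ker (fun j => if j = i then 0 else X j)
  · intro g hg
    simp only [Set.mem_singleton_iff] at hg
    subst hg
    simp
  · intro j
    rcases eq_or_ne j i with rfl | h
    · rw [if_pos rfl, sub_zero]
      exact Ideal.subset_span (Set.mem_singleton _)
    · rw [if_neg h, sub_self]
      exact Ideal.zero_mem _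

/-- `C a * X - C b` is irreducible over a UFD-like setting when `a` is prime and `a ∤ b`. -/
lemma irreducible_linear {S : Type*} [CommRing S] [IsDomain S] {a b : S}
    (ha : Prime a) (hab : ∀ c : S, c ∣ a → c ∣ b → IsUnit c) :
    Irreducible (Polynomial.C a * Polynomial.X - Polynomial.C b) := by
  set p : Polynomial S := Polynomial.C a * Polynomial.X - Polynomial.C b with hp
  have hpeq : p = Polynomial.C a * Polynomial.X + Polynomial.C (-b) := by
    rw [hp, map_neg]; ring
  have hdeg : p.natDegree = 1 := by rw [hpeq]; exact Polynomial.natDegree_linear ha.ne_zero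
  have hp0 : p ≠ 0 := fun h => by simp [h] at hdeg
  have hcoeff1 : p.coeff 1 = a := by simp [hpeq]
  have hcoeff0 : p.coeff 0 = -b := by simp [hpeq]
  have key : ∀ f g : Polynomial S, p = f * g → f.natDegree = 0 → IsUnit f := by
    intro f g hfg hf0
    have hf := Polynomial.eq_C_of_natDegree_eq_zero hf0
    set c := f.coeff 0 with hc
    have hdvd1 : c ∣ a := by
      refine ⟨g.coeff 1, ?_⟩
      rw [← hcoeff1, hfg, hf]
      simp [Polynomial.coeff_C_mul]
    have hdvd0 : c ∣ b := by
      have : c ∣ -b := by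
        refine ⟨g.coeff 0, ?_⟩
        rw [← hcoeff0, hfg, hf]
        simp [Polynomial.coeff_C_mul]
      exact (dvd_neg).mp this
    rw [hf, Polynomial.isUnit_C]
    exact hab c hdvd1 hdvd0
  constructor
  · intro hu
    have := Polynomial.natDegree_eq_zero_of_isUnit hu
    omega
  · intro f g hfg
    have hf0 : f ≠ 0 := fun h => hp0 (by rw [hfg, h, zero_mul])
    have hg0 : g ≠ 0 := fun h => hp0 (by rw [hfg, h, mul_zero])
    have hsum : f.natDegree + g.natDegree = 1 := by
      rw [← Polynomial.natDegree_mul hf0 hg0, ← hfg, hdeg]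
    rcases Nat.eq_zero_or_pos f.natDegree with hf | hf
    · exact Or.inl (key f g hfg hf)
    · have hg : g.natDegree = 0 := by omega
      exact Or.inr (key g f (by rw [hfg, mul_comm]) hg)

lemma prime_q : Prime ((X 2 * X 4 - (X 3) ^ 2 : MvPolynomial (Fin 6) K)) := by
  classical
  set E := (renameEquiv K (Equiv.swap (0 : Fin 6) 4)).trans (finSuccEquiv K 5) with hE
  rw [← MulEquiv.prime_iff E.toMulEquiv]
  have h2 : Equiv.swap (0 : Fin 6) 4 2 = 2 := by decide
  have h3 : Equiv.swap (0 : Fin 6) 4 3 = 3 := by decide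
  have h4 : Equiv.swap (0 : Fin 6) 4 4 = 0 := by decide
  have hEq : E (X 2 * X 4 - (X 3) ^ 2) =
      Polynomial.C (X 1) * Polynomial.X - Polynomial.C ((X 2 : MvPolynomial (Fin 5) K) ^ 2) := by
    have e2 : ((2 : Fin 6)) = Fin.succ 1 := rfl
    have e3 : ((3 : Fin 6)) = Fin.succ 2 := rfl
    rw [hE]
    simp only [AlgEquiv.trans_apply, map_sub, map_mul, map_pow, renameEquiv_apply, rename_X,
      h2, h3, h4]
    rw [e2, e3]
    simp only [finSuccEquiv_X_zero, finSuccEquiv_X_succ, map_pow]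
  have hirr := irreducible_linear (S := MvPolynomial (Fin 5) K)
    (a := X 1) (b := (X 2) ^ 2) (prime_X' 1) ?_
  · have hp := UniqueFactorizationMonoid.irreducible_iff_prime.mp hirr
    show Prime (E (X 2 * X 4 - (X 3) ^ 2))
    rw [hEq]
    exact hp
  · intro c hc1 hc2
    obtain ⟨d, hd⟩ := hc1
    rcases ((prime_X' (K := K) (1 : Fin 5)).irreducible.isUnit_or_isUnit hd) with h | h
    · exact h
    · exfalso
      have hc1 : c ∣ (X 1 : MvPolynomial (Fin 5) K) := ⟨d, hd⟩
      have hX1c : (X 1 : MvPolynomial (Fin 5) K) ∣ c := by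
        obtain ⟨u, hu⟩ := isUnit_iff_exists_inv.mp h
        exact ⟨u, by rw [← mul_one c, ← hu, ← mul_assoc, ← hd]⟩
      have : (X 1 : MvPolynomial (Fin 5) K) ∣ X 2 :=
        (prime_X' 1).dvd_of_dvd_pow (dvd_trans hX1c hc2)
      exact X_not_dvd_X (by decide) this

end FiberConeAux

open FiberConeAux

/-- In `K[T₁,...,T₆]`, the ideal `J = (T₃T₅ - T₄², T₁T₄, T₁T₅, T₁T₆, T₃T₆, T₄T₆)` equals
the radical of the ideal generated by `F₁ = T₃T₅ - T₄²`, `G₁ = T₁T₅ + T₃T₆`, `G₂ = T₁T₆`. -/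
theorem fiber_cone_stci (K : Type*) [Field K] :
    (Ideal.span ({X 2 * X 4 - (X 3) ^ 2, X 0 * X 3, X 0 * X 4, X 0 * X 5,
        X 2 * X 5, X 3 * X 5} : Set (MvPolynomial (Fin 6) K))) =
      (Ideal.span ({X 2 * X 4 - (X 3) ^ 2, X 0 * X 4 + X 2 * X 5, X 0 * X 5} :
          Set (MvPolynomial (Fin 6) K))).radical := by
  classical
  set R := MvPolynomial (Fin 6) K
  set q : R := X 2 * X 4 - (X 3) ^ 2 with hqdef
  set J : Ideal R := Ideal.span ({X 2 * X 4 - (X 3) ^ 2, X 0 * X 3, X 0 * X 4, X 0 * X 5,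
      X 2 * X 5, X 3 * X 5} : Set R) with hJdef
  set I : Ideal R := Ideal.span ({X 2 * X 4 - (X 3) ^ 2, X 0 * X 4 + X 2 * X 5, X 0 * X 5} :
      Set R) with hIdef
  have hqI : q ∈ I := Ideal.subset_span (by simp [hqdef])
  have hG1I : (X 0 * X 4 + X 2 * X 5 : R) ∈ I := Ideal.subset_span (by simp)
  have hG2I : (X 0 * X 5 : R) ∈ I := Ideal.subset_span (by simp)
  apply le_antisymm
  · -- J ≤ radical I
    rw [hJdef, Ideal.span_le]
    intro g hg
    simp only [Set.mem_insert_iff, Set.mem_singleton_iff] at hg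
    rcases hg with rfl | rfl | rfl | rfl | rfl | rfl
    · exact Ideal.le_radical hqI
    · refine Ideal.mem_radical_iff.mpr ⟨2, ?_⟩
      have hid : (X 0 * X 3 : R) ^ 2 = X 0 * X 2 * (X 0 * X 4 + X 2 * X 5)
          + (-(X 2 * X 2)) * (X 0 * X 5) + (-(X 0 * X 0)) * (X 2 * X 4 - (X 3) ^ 2) := by
        ring
      rw [hid]
      exact I.add_mem (I.add_mem (I.mul_mem_left _ hG1I) (I.mul_mem_left _ hG2I))
        (I.mul_mem_left _ hqI)
    · refine Ideal.mem_radical_iff.mpr ⟨2, ?_⟩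
      have hid : (X 0 * X 4 : R) ^ 2 = X 0 * X 4 * (X 0 * X 4 + X 2 * X 5)
          + (-(X 2 * X 4)) * (X 0 * X 5) := by ring
      rw [hid]
      exact I.add_mem (I.mul_mem_left _ hG1I) (I.mul_mem_left _ hG2I)
    · exact Ideal.le_radical hG2I
    · refine Ideal.mem_radical_iff.mpr ⟨2, ?_⟩
      have hid : (X 2 * X 5 : R) ^ 2 = X 2 * X 5 * (X 0 * X 4 + X 2 * X 5)
          + (-(X 2 * X 4)) * (X 0 * X 5) := by ring
      rw [hid]
      exact I.add_mem (I.mul_mem_left _ hG1I) (I.mul_mem_left _ hG2I)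
    · refine Ideal.mem_radical_iff.mpr ⟨4, ?_⟩
      have hid : (X 3 * X 5 : R) ^ 4 = X 2 * X 4 ^ 2 * X 5 ^ 3 * (X 0 * X 4 + X 2 * X 5)
          + (-(X 2 * X 4 ^ 3 * X 5 ^ 2)) * (X 0 * X 5)
          + (-((X 2 * X 4 + (X 3) ^ 2) * X 5 ^ 4)) * (X 2 * X 4 - (X 3) ^ 2) := by ring
      rw [hid]
      exact I.add_mem (I.add_mem (I.mul_mem_left _ hG1I) (I.mul_mem_left _ hG2I))
        (I.mul_mem_left _ hqI)
  · -- radical I ≤ J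
    intro f hf
    obtain ⟨m, hm⟩ := Ideal.mem_radical_iff.mp hf
    -- the two coordinate primes
    set P2 : Ideal R := Ideal.span ({X 0, X 2, X 3} : Set R) with hP2def
    set P3 : Ideal R := Ideal.span ({X 3, X 4, X 5} : Set R) with hP3def
    set ρ2 : Fin 6 → R := fun i => if i = 0 ∨ i = 2 ∨ i = 3 then 0 else X i with hρ2
    set ρ3 : Fin 6 → R := fun i => if i = 3 ∨ i = 4 ∨ i = 5 then 0 else X i with hρ3
    have hS2 : ∀ g ∈ ({X 0, X 2, X 3} : Set R), aeval ρ2 g = 0 := by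
      intro g hg
      simp only [Set.mem_insert_iff, Set.mem_singleton_iff] at hg
      rcases hg with rfl | rfl | rfl <;> simp [hρ2]
    have hX2 : ∀ i, (X i : R) - ρ2 i ∈ P2 := by
      intro i
      fin_cases i <;> simp [hρ2] <;> exact Ideal.subset_span (by simp)
    have hS3 : ∀ g ∈ ({X 3, X 4, X 5} : Set R), aeval ρ3 g = 0 := by
      intro g hg
      simp only [Set.mem_insert_iff, Set.mem_singleton_iff] at hg
      rcases hg with rfl | rfl | rfl <;> simp [hρ3]
    have hX3 : ∀ i, (X i : R) - ρ3 i ∈ P3 := by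
      intro i
      fin_cases i <;> simp [hρ3] <;> exact Ideal.subset_span (by simp)
    have hP2prime : P2.IsPrime := isPrime_of_ker ρ2 _ hS2 hX2
    have hP3prime : P3.IsPrime := isPrime_of_ker ρ3 _ hS3 hX3
    have hX5notP2 : (X 5 : R) ∉ P2 := by
      refine not_mem_of_ker ρ2 _ hS2 hX2 ?_
      simpa [hρ2] using X_ne_zero (5 : Fin 6)
    have hX0notP3 : (X 0 : R) ∉ P3 := by
      refine not_mem_of_ker ρ3 _ hS3 hX3 ?_
      simpa [hρ3] using X_ne_zero (0 : Fin 6)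
    -- I is contained in both primes
    have hIP2 : I ≤ P2 := by
      rw [hIdef, Ideal.span_le]
      intro g hg
      simp only [Set.mem_insert_iff, Set.mem_singleton_iff] at hg
      have h0 : (X 0 : R) ∈ P2 := Ideal.subset_span (by simp)
      have h2 : (X 2 : R) ∈ P2 := Ideal.subset_span (by simp)
      have h3 : (X 3 : R) ∈ P2 := Ideal.subset_span (by simp)
      rcases hg with rfl | rfl | rfl
      · exact P2.sub_mem (P2.mul_mem_right _ h2) (by rw [pow_two]; exact P2.mul_mem_right _ h3)
      · exact P2.add_mem (P2.mul_mem_right _ h0) (P2.mul_mem_right _ h2)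
      · exact P2.mul_mem_right _ h0
    have hIP3 : I ≤ P3 := by
      rw [hIdef, Ideal.span_le]
      intro g hg
      simp only [Set.mem_insert_iff, Set.mem_singleton_iff] at hg
      have h3 : (X 3 : R) ∈ P3 := Ideal.subset_span (by simp)
      have h4 : (X 4 : R) ∈ P3 := Ideal.subset_span (by simp)
      have h5 : (X 5 : R) ∈ P3 := Ideal.subset_span (by simp)
      rcases hg with rfl | rfl | rfl
      · exact P3.sub_mem (P3.mul_mem_left _ h4) (by rw [pow_two]; exact P3.mul_mem_right _ h3)
      · exact P3.add_mem (P3.mul_mem_left _ h4) (P3.mul_mem_left _ h5)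
      · exact P3.mul_mem_left _ h5
    have hf2 : f ∈ P2 := by
      have := Ideal.radical_mono hIP2 hf
      rwa [hP2prime.radical] at this
    have hf3 : f ∈ P3 := by
      have := Ideal.radical_mono hIP3 hf
      rwa [hP3prime.radical] at this
    -- substitutions
    set ρ5 : Fin 6 → R := fun i => if i = 5 then 0 else X i with hρ5
    set ρ0 : Fin 6 → R := fun i => if i = 0 then 0 else X i with hρ0
    have hgspan : f - aeval ρ5 f ∈ Ideal.span ({X 5} : Set R) := by
      refine sub_aeval_mem ρ5 _ ?_ f
      intro i
      rcases eq_or_ne i 5 with rfl | h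
      · simp only [hρ5, if_pos rfl, sub_zero]
        exact Ideal.subset_span (Set.mem_singleton _)
      · simp only [hρ5, if_neg h, sub_self]
        exact Ideal.zero_mem _
    have hσf2 : aeval ρ5 f ∈ P2 := by
      refine aeval_mem_span ρ5 ?_ hf2
      intro g hg
      simp only [Set.mem_insert_iff, Set.mem_singleton_iff] at hg
      rcases hg with rfl | rfl | rfl <;>
        simp only [aeval_X, hρ5] <;> norm_num <;>
        first
          | exact Ideal.subset_span (by simp)
          | exact Ideal.zero_mem _
    have hσf3 : aeval ρ5 f ∈ P3 := by
      refine aeval_mem_span ρ5 ?_ hf3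
      intro g hg
      simp only [Set.mem_insert_iff, Set.mem_singleton_iff] at hg
      rcases hg with rfl | rfl | rfl <;>
        simp only [aeval_X, hρ5] <;> norm_num <;>
        first
          | exact Ideal.subset_span (by simp)
          | exact Ideal.zero_mem _
    obtain ⟨B, hB⟩ := Ideal.mem_span_singleton'.mp hgspan
    have hgP2 : f - aeval ρ5 f ∈ P2 := P2.sub_mem hf2 hσf2
    have hBP2 : B ∈ P2 := by
      rw [← hB] at hgP2
      rw [mul_comm] at hgP2
      exact (hP2prime.mem_or_mem hgP2).resolve_left hX5notP2
    have hgJ : f - aeval ρ5 f ∈ J := by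
      rw [← hB, mul_comm]
      refine mul_mem_of_span ?_ hBP2
      intro g hg
      simp only [Set.mem_insert_iff, Set.mem_singleton_iff] at hg
      rcases hg with rfl | rfl | rfl
      · rw [mul_comm]
        exact Ideal.subset_span (by simp)
      · rw [mul_comm]
        exact Ideal.subset_span (by simp)
      · rw [mul_comm]
        exact Ideal.subset_span (by simp)
    -- power of σ f lies in (q, X0 X4)
    have hn5 : (aeval ρ5 f) ^ m ∈ Ideal.span ({X 2 * X 4 - (X 3) ^ 2, X 0 * X 4} : Set R) := by
      rw [← map_pow]
      refine aeval_mem_span ρ5 ?_ hm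
      intro g hg
      simp only [hIdef, Set.mem_insert_iff, Set.mem_singleton_iff] at hg
      rcases hg with rfl | rfl | rfl <;>
        simp only [map_sub, map_add, map_mul, map_pow, aeval_X, hρ5] <;> norm_num <;>
        first
          | exact Ideal.subset_span (by simp)
          | exact Ideal.zero_mem _
    -- now substitute X0 ↦ 0
    have hkspan : aeval ρ5 f - aeval ρ0 (aeval ρ5 f) ∈ Ideal.span ({X 0} : Set R) := by
      refine sub_aeval_mem ρ0 _ ?_ _
      intro i
      rcases eq_or_ne i 0 with rfl | h
      · simp only [hρ0, if_pos rfl, sub_zero]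
        exact Ideal.subset_span (Set.mem_singleton _)
      · simp only [hρ0, if_neg h, sub_self]
        exact Ideal.zero_mem _
    have hτσf3 : aeval ρ0 (aeval ρ5 f) ∈ P3 := by
      refine aeval_mem_span ρ0 ?_ hσf3
      intro g hg
      simp only [Set.mem_insert_iff, Set.mem_singleton_iff] at hg
      rcases hg with rfl | rfl | rfl <;>
        simp only [aeval_X, hρ0] <;> norm_num <;>
        first
          | exact Ideal.subset_span (by simp)
          | exact Ideal.zero_mem _
    obtain ⟨D, hD⟩ := Ideal.mem_span_singleton'.mp hkspan
    have hkP3 : aeval ρ5 f - aeval ρ0 (aeval ρ5 f) ∈ P3 := P3.sub_mem hσf3 hτσf3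
    have hDP3 : D ∈ P3 := by
      rw [← hD, mul_comm] at hkP3
      exact (hP3prime.mem_or_mem hkP3).resolve_left hX0notP3
    have hkJ : aeval ρ5 f - aeval ρ0 (aeval ρ5 f) ∈ J := by
      rw [← hD, mul_comm]
      refine mul_mem_of_span ?_ hDP3
      intro g hg
      simp only [Set.mem_insert_iff, Set.mem_singleton_iff] at hg
      rcases hg with rfl | rfl | rfl <;> exact Ideal.subset_span (by simp)
    -- the remaining part lands in (q)
    have hcq : (aeval ρ0 (aeval ρ5 f)) ^ m ∈ Ideal.span ({q} : Set R) := by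
      rw [← map_pow]
      refine aeval_mem_span ρ0 ?_ hn5
      intro g hg
      simp only [Set.mem_insert_iff, Set.mem_singleton_iff] at hg
      rcases hg with rfl | rfl <;>
        simp only [map_sub, map_mul, map_pow, aeval_X, hρ0] <;> norm_num <;>
        first
          | exact Ideal.subset_span (by simp [hqdef])
          | exact Ideal.zero_mem _
    have hq_prime : (Ideal.span ({q} : Set R)).IsPrime :=
      (Ideal.span_singleton_prime (prime_q (K := K)).ne_zero).mpr (prime_q (K := K))
    have hcmem : aeval ρ0 (aeval ρ5 f) ∈ Ideal.span ({q} : Set R) :=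
      hq_prime.mem_of_pow_mem m hcq
    have hcJ : aeval ρ0 (aeval ρ5 f) ∈ J := by
      have hle : Ideal.span ({q} : Set R) ≤ J := by
        rw [Ideal.span_le]
        intro g hg
        simp only [Set.mem_singleton_iff] at hg
        subst hg
        exact Ideal.subset_span (by simp [hqdef])
      exact hle hcmem
    have hfsplit : f = (f - aeval ρ5 f) + (aeval ρ5 f - aeval ρ0 (aeval ρ5 f))
        + aeval ρ0 (aeval ρ5 f) := by ring
    rw [hfsplit]
    exact J.add_mem (J.add_mem hgJ hkJ) hcJ
end

section
/- Let K be a field. For points t = (t_1,...,t_6) ∈ K^6, the common zero set of F_1 = t_3t_5 - t_4^2, G_1 = t_1t_5 + t_3t_6, G_2 = t_1t_6 equals the common zero set of the six polynomials t_3t_5 - t_4^2, t_1t_4, t_1t_5, t_1t_6, t_3t_6, t_4t_6. -/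
/-- Over a field `K`, the common zero set in `K⁶` of `F₁ = t₃t₅ - t₄²`,
`G₁ = t₁t₅ + t₃t₆`, `G₂ = t₁t₆` equals the common zero set of the six polynomials
`t₃t₅ - t₄²`, `t₁t₄`, `t₁t₅`, `t₁t₆`, `t₃t₆`, `t₄t₆`. -/
theorem fiber_cone_zeroset (K : Type*) [Field K] :
    {t : Fin 6 → K |
        t 2 * t 4 - (t 3) ^ 2 = 0 ∧ t 0 * t 4 + t 2 * t 5 = 0 ∧ t 0 * t 5 = 0} =
      {t : Fin 6 → K |
        t 2 * t 4 - (t 3) ^ 2 = 0 ∧ t 0 * t 3 = 0 ∧ t 0 * t 4 = 0 ∧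
        t 0 * t 5 = 0 ∧ t 2 * t 5 = 0 ∧ t 3 * t 5 = 0} := by
  ext t
  simp only [Set.mem_setOf_eq]
  constructor
  · rintro ⟨h1, h2, h3⟩
    rcases mul_eq_zero.mp h3 with h0 | h5
    · have hc5 : t 2 * t 5 = 0 := by
        have := h2; rw [h0, zero_mul, zero_add] at this; exact this
      have h35 : t 3 * t 5 = 0 := by
        have : (t 3 * t 5) ^ 2 = (t 2 * t 5) * (t 4 * t 5) := by
          linear_combination (-(t 5)^2) * h1
        rw [hc5, zero_mul] at this
        exact pow_eq_zero_iff (n := 2) (by norm_num) |>.mp this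
      exact ⟨h1, by rw [h0, zero_mul], by rw [h0, zero_mul], h3, hc5, h35⟩
    · have h04 : t 0 * t 4 = 0 := by
        have := h2; rw [h5, mul_zero, add_zero] at this; exact this
      have h03 : t 0 * t 3 = 0 := by
        have : (t 0 * t 3) ^ 2 = (t 0 * t 4) * (t 0 * t 2) := by
          linear_combination (-(t 0)^2) * h1
        rw [h04, zero_mul] at this
        exact pow_eq_zero_iff (n := 2) (by norm_num) |>.mp this
      exact ⟨h1, h03, h04, h3, by rw [h5, mul_zero], by rw [h5, mul_zero]⟩
  · rintro ⟨h1, h2, h3, h4, h5, h6⟩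
    exact ⟨h1, by rw [h3, h5, add_zero], h4⟩
end

section
/- Let K be a field and let G_k = Σ_{i=1}^{r-k} X^i_1 X^{i+k}_{c_{i+k}+1} in a polynomial ring over K (for k = 1,...,r−1), where all the variables X^i_1 and X^{i+k}_{c_{i+k}+1} appearing are distinct indeterminates. If a point x makes all G_k vanish, then every individual monomial x^i_1 x^{i+k}_{c_{i+k}+1} vanishes, for all 1 ≤ i ≤ r−1 and 1 ≤ k ≤ r−i. -/
/-- Let `K` be an algebraically closed field, `r ≥ 2`, and let `a i` (the values `x^i_1`)
and `b i` (the values `x^i_{c_i+1}`) be the values at a point of the distinct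
indeterminates occurring in the polynomials `G_k = ∑_{i=1}^{r-k} X^i_1 X^{i+k}_{c_{i+k}+1}`.
If all `G_k` (for `1 ≤ k ≤ r-1`) vanish at the point, then every individual monomial
`x^i_1 x^{i+k}_{c_{i+k}+1}` vanishes, for all `1 ≤ i ≤ r-1` and `1 ≤ k ≤ r-i`. -/
theorem Gk_monomials_vanish (K : Type*) [Field K] [IsAlgClosed K]
    (r : ℕ) (hr : 2 ≤ r) (a b : ℕ → K)
    (hG : ∀ k, 1 ≤ k → k ≤ r - 1 → ∑ i ∈ Finset.Icc 1 (r - k), a i * b (i + k) = 0) :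
    ∀ i k, 1 ≤ i → i ≤ r - 1 → 1 ≤ k → k ≤ r - i → a i * b (i + k) = 0 := by
  suffices H : ∀ n k, r - k = n → 1 ≤ k → k ≤ r - 1 →
      ∀ i, 1 ≤ i → i ≤ r - k → a i * b (i + k) = 0 by
    intro i k hi1 hi2 hk1 hk2
    exact H (r - k) k rfl hk1 (by omega) i hi1 (by omega)
  intro n
  induction n using Nat.strong_induction_on with
  | _ n IH =>
    intro k hn hk1 hk2 i hi1 hi2
    have cross : ∀ m ∈ Finset.Icc 1 (r - k), m ≠ i →
        (a i * b (i + k)) * (a m * b (m + k)) = 0 := by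
      intro m hm hmi
      simp only [Finset.mem_Icc] at hm
      rcases lt_or_gt_of_ne hmi with h | h
      · -- m < i : use gap i - m + k > k applied at index m
        have h0 := IH (r - (i - m + k)) (by omega) (i - m + k) rfl (by omega) (by omega)
          m (by omega) (by omega)
        have hb : m + (i - m + k) = i + k := by omega
        rw [hb] at h0
        have : (a i * b (i + k)) * (a m * b (m + k))
            = (a m * b (i + k)) * (a i * b (m + k)) := by ring
        rw [this, h0, zero_mul]
      · -- i < m : use gap m - i + k > k applied at index i
        have h0 := IH (r - (m - i + k)) (by omega) (m - i + k) rfl (by omega) (by omega)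
          i (by omega) (by omega)
        have hb : i + (m - i + k) = m + k := by omega
        rw [hb] at h0
        have : (a i * b (i + k)) * (a m * b (m + k))
            = (a i * b (m + k)) * (a m * b (i + k)) := by ring
        rw [this, h0, zero_mul]
    have hsum := hG k hk1 hk2
    have h0 : (a i * b (i + k)) * ∑ m ∈ Finset.Icc 1 (r - k), a m * b (m + k) = 0 := by
      rw [hsum, mul_zero]
    rw [Finset.mul_sum, Finset.sum_eq_single i cross
      (fun h => absurd (Finset.mem_Icc.mpr ⟨hi1, hi2⟩) h)] at h0
    exact mul_self_eq_zero.mp h0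
end

section
/- Let a_{1}, ..., a_{r} and b_{1}, ..., b_{r} be elements of a field K such that Σ_{i=1}^{r-k} a_i b_{i+k} = 0 for every k = 1, ..., r−1. Then a_i b_j = 0 for all 1 ≤ i < j ≤ r. -/
/-- Let `a 1, ..., a r` and `b 1, ..., b r` be elements of a field `K` such that
`∑_{i=1}^{r-k} a i * b (i+k) = 0` for every `k = 1, ..., r-1`. Then `a i * b j = 0`
for all `1 ≤ i < j ≤ r`. -/
theorem schmitt_vogel_evaluation (K : Type*) [Field K] (r : ℕ) (a b : ℕ → K)
    (hG : ∀ k, 1 ≤ k → k ≤ r - 1 → ∑ i ∈ Finset.Icc 1 (r - k), a i * b (i + k) = 0) :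
    ∀ i j, 1 ≤ i → i < j → j ≤ r → a i * b j = 0 := by
  suffices h : ∀ n d, r - d ≤ n → 1 ≤ d → ∀ i, 1 ≤ i → i + d ≤ r → a i * b (i + d) = 0 by
    intro i j h1 hij hj
    have := h r (j - i) (Nat.sub_le _ _) (by omega) i h1 (by omega)
    have hij' : i + (j - i) = j := by omega
    rwa [hij'] at this
  intro n
  induction n with
  | zero => intro d hd h1 i hi hir; omega
  | succ n ih =>
    intro d hdn hd1 i hi hir
    have hsum := hG d hd1 (by omega)
    have key : ∀ j ∈ Finset.Icc 1 (r - d), j ≠ i →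
        (a i * b (i + d)) * (a j * b (j + d)) = 0 := by
      intro j hj hne
      simp only [Finset.mem_Icc] at hj
      rcases lt_or_gt_of_ne hne with hlt | hgt
      · -- j < i : use a j * b (i+d) = 0, gap i+d-j > d
        have hz : a j * b (j + (i + d - j)) = 0 :=
          ih (i + d - j) (by omega) (by omega) j hj.1 (by omega)
        have hz' : a j * b (i + d) = 0 := by
          have : j + (i + d - j) = i + d := by omega
          rwa [this] at hz
        calc (a i * b (i + d)) * (a j * b (j + d))
            = (a j * b (i + d)) * (a i * b (j + d)) := by ring
          _ = 0 := by rw [hz', zero_mul]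
      · -- i < j : use a i * b (j+d) = 0, gap j+d-i > d
        have hz : a i * b (i + (j + d - i)) = 0 :=
          ih (j + d - i) (by omega) (by omega) i hi (by omega)
        have hz' : a i * b (j + d) = 0 := by
          have : i + (j + d - i) = j + d := by omega
          rwa [this] at hz
        calc (a i * b (i + d)) * (a j * b (j + d))
            = (a i * b (j + d)) * (a j * b (i + d)) := by ring
          _ = 0 := by rw [hz', zero_mul]
    have hsq : (a i * b (i + d)) ^ 2 = 0 := by
      have hmem : i ∈ Finset.Icc 1 (r - d) := Finset.mem_Icc.mpr ⟨hi, by omega⟩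
      have : (a i * b (i + d)) * ∑ j ∈ Finset.Icc 1 (r - d), a j * b (j + d)
          = (a i * b (i + d)) ^ 2 := by
        rw [Finset.mul_sum, Finset.sum_eq_single i key (fun h => absurd hmem h)]
        ring
      rw [hsum, mul_zero] at this
      exact this.symm
    exact pow_eq_zero_iff (two_ne_zero) |>.mp hsq
end

section
/- In the polynomial ring R over a field K in variables a_1,...,a_r, b_1,...,b_r, the radical of the ideal generated by all products a_i b_j with 1 ≤ i < j ≤ r equals the radical of the ideal generated by the r−1 polynomials G_k = Σ_{i=1}^{r-k} a_i b_{i+k}, k = 1,...,r−1. -/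
open MvPolynomial

private lemma prime_step {R : Type*} [CommRing R] (r : ℕ) (A B : ℕ → R)
    (P : Ideal R) (hP : P.IsPrime)
    (hG : ∀ k, 1 ≤ k → k ≤ r - 1 → ∑ i ∈ Finset.range (r - k), A i * B (i + k) ∈ P) :
    ∀ n i j, i < j → j < r → r - (j - i) ≤ n → A i * B j ∈ P := by
  intro n
  induction n with
  | zero => intro i j hij hjr h; omega
  | succ n ih =>
    intro i j hij hjr h
    set k := j - i with hk
    have hk1 : 1 ≤ k := by omega
    have hk2 : k ≤ r - 1 := by omega
    have hik : i < r - k := by omega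
    have hj : j = i + k := by omega
    have hG' := hG k hk1 hk2
    have hsplit : (A i * B j) * ∑ t ∈ Finset.range (r - k), A t * B (t + k)
        = (A i * B j) * (A i * B (i + k))
          + ∑ t ∈ (Finset.range (r - k)).erase i, (A i * B j) * (A t * B (t + k)) := by
      rw [Finset.mul_sum, ← Finset.add_sum_erase _ _ (Finset.mem_range.mpr hik)]
    have hsum : ∑ t ∈ (Finset.range (r - k)).erase i, (A i * B j) * (A t * B (t + k)) ∈ P := by
      refine Ideal.sum_mem _ fun t ht => ?_
      obtain ⟨hti, htr⟩ := Finset.mem_erase.mp ht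
      have htr' : t < r - k := Finset.mem_range.mp htr
      rcases lt_or_gt_of_ne hti with hlt | hgt
      · have hmem : A t * B (i + k) ∈ P := ih t (i + k) (by omega) (by omega) (by omega)
        have heq : (A i * B j) * (A t * B (t + k))
            = (A t * B (i + k)) * (A i * B (t + k)) := by rw [hj]; ring
        rw [heq]
        exact Ideal.mul_mem_right _ _ hmem
      · have hmem : A i * B (t + k) ∈ P := ih i (t + k) (by omega) (by omega) (by omega)
        have heq : (A i * B j) * (A t * B (t + k))
            = (A i * B (t + k)) * (A t * B (i + k)) := by rw [hj]; ring
        rw [heq]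
        exact Ideal.mul_mem_right _ _ hmem
    have hsq : (A i * B j) ^ 2 ∈ P := by
      have heq : (A i * B j) ^ 2
          = (A i * B j) * (∑ t ∈ Finset.range (r - k), A t * B (t + k))
            - ∑ t ∈ (Finset.range (r - k)).erase i, (A i * B j) * (A t * B (t + k)) := by
        rw [hsplit, hj]; ring
      rw [heq]
      exact Ideal.sub_mem _ (Ideal.mul_mem_left _ _ hG') hsum
    exact hP.mem_of_pow_mem 2 hsq

/-- In the polynomial ring over a field `K` in variables `a 0, ..., a (r-1)`,
`b 0, ..., b (r-1)` (indexed by `Fin r ⊕ Fin r`), the radical of the ideal generated by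
all products `a i * b j` with `i < j` equals the radical of the ideal generated by the
`r - 1` polynomials `G k = ∑_{i} a i * b (i + k)`, for `k = 1, ..., r - 1`. -/
theorem upper_products_radical (K : Type*) [Field K] (r : ℕ)
    (A B : ℕ → MvPolynomial (Fin r ⊕ Fin r) K)
    (hA : ∀ i (h : i < r), A i = X (Sum.inl ⟨i, h⟩))
    (hB : ∀ i (h : i < r), B i = X (Sum.inr ⟨i, h⟩)) :
    (Ideal.span {p | ∃ i j, i < j ∧ j < r ∧ p = A i * B j}).radical =
      (Ideal.span {q | ∃ k, 1 ≤ k ∧ k ≤ r - 1 ∧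
        q = ∑ i ∈ Finset.range (r - k), A i * B (i + k)}).radical := by
  apply le_antisymm
  · have hle : Ideal.span {p | ∃ i j, i < j ∧ j < r ∧ p = A i * B j}
        ≤ (Ideal.span {q | ∃ k, 1 ≤ k ∧ k ≤ r - 1 ∧
            q = ∑ i ∈ Finset.range (r - k), A i * B (i + k)}).radical := by
      rw [Ideal.span_le]
      rintro p ⟨i, j, hij, hjr, rfl⟩
      rw [Ideal.radical_eq_sInf]
      refine Submodule.mem_sInf.mpr ?_
      rintro P ⟨hJP, hP⟩
      exact prime_step r A B P hP
        (fun k hk1 hk2 => hJP (Ideal.subset_span ⟨k, hk1, hk2, rfl⟩))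
        r i j hij hjr (by omega)
    exact (Ideal.radical_mono hle).trans (Ideal.radical_idem _).le
  · apply Ideal.radical_mono
    rw [Ideal.span_le]
    rintro q ⟨k, hk1, hk2, rfl⟩
    refine Ideal.sum_mem _ fun i hi => ?_
    have hi' : i < r - k := Finset.mem_range.mp hi
    exact Ideal.subset_span ⟨i, i + k, by omega, by omega, rfl⟩
end

section
/- In the polynomial ring K[X_7] localization setting: for the ideal J = (X_1X_4 - X_2X_3, X_3X_6 - X_4X_5, X_1X_6 - X_2X_5, X_1X_7, X_3X_7, X_5X_7) in R = K[X_1,...,X_7], the localization J_{X_7} of J at the powers of X_7 equals the extension of the ideal (X_1, X_3, X_5) in R_{X_7}. -/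
open MvPolynomial

/-- For `J = (X₁X₄ - X₂X₃, X₃X₆ - X₄X₅, X₁X₆ - X₂X₅, X₁X₇, X₃X₇, X₅X₇)` in
`R = K[X₁,...,X₇]`, the extension of `J` to the localization `R_{X₇}` of `R` at the
powers of `X₇` equals the extension of the ideal `(X₁, X₃, X₅)`. -/
theorem localization_J_X7 (K : Type*) [Field K] :
    Ideal.map (algebraMap (MvPolynomial (Fin 7) K)
        (Localization.Away (X 6 : MvPolynomial (Fin 7) K)))
      (Ideal.span ({X 0 * X 3 - X 1 * X 2, X 2 * X 5 - X 3 * X 4,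
        X 0 * X 5 - X 1 * X 4, X 0 * X 6, X 2 * X 6, X 4 * X 6} :
          Set (MvPolynomial (Fin 7) K))) =
    Ideal.map (algebraMap (MvPolynomial (Fin 7) K)
        (Localization.Away (X 6 : MvPolynomial (Fin 7) K)))
      (Ideal.span ({X 0, X 2, X 4} : Set (MvPolynomial (Fin 7) K))) := by
  set R := MvPolynomial (Fin 7) K
  set f : R →+* Localization.Away (X 6 : R) :=
    algebraMap R (Localization.Away (X 6 : R)) with hf
  set I : Ideal R := Ideal.span ({X 0, X 2, X 4} : Set R) with hI
  set J : Ideal R := Ideal.span ({X 0 * X 3 - X 1 * X 2, X 2 * X 5 - X 3 * X 4,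
      X 0 * X 5 - X 1 * X 4, X 0 * X 6, X 2 * X 6, X 4 * X 6} : Set R) with hJ
  have h0 : (X 0 : R) ∈ I := Ideal.subset_span (by simp)
  have h2 : (X 2 : R) ∈ I := Ideal.subset_span (by simp)
  have h4 : (X 4 : R) ∈ I := Ideal.subset_span (by simp)
  obtain ⟨u, hu⟩ : IsUnit (f (X 6 : R)) :=
    IsLocalization.map_units (M := Submonoid.powers (X 6 : R)) _
      ⟨X 6, Submonoid.mem_powers _⟩
  have key : ∀ a : R, a * X 6 ∈ J → f a ∈ Ideal.map f J := by
    intro a ha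
    have h1 : f (a * X 6) ∈ Ideal.map f J := Ideal.mem_map_of_mem f ha
    have h2 : f a = ↑u⁻¹ * f (a * X 6) := by
      rw [map_mul, ← hu, mul_comm (f a), ← mul_assoc, Units.inv_mul, one_mul]
    rw [h2]
    exact Ideal.mul_mem_left _ _ h1
  apply le_antisymm
  · rw [Ideal.map_le_iff_le_comap, Ideal.span_le]
    intro p hp
    simp only [Set.mem_insert_iff, Set.mem_singleton_iff] at hp
    have : p ∈ I := by
      rcases hp with rfl | rfl | rfl | rfl | rfl | rfl
      · exact sub_mem (Ideal.mul_mem_right _ _ h0) (Ideal.mul_mem_left _ _ h2)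
      · exact sub_mem (Ideal.mul_mem_right _ _ h2) (Ideal.mul_mem_left _ _ h4)
      · exact sub_mem (Ideal.mul_mem_right _ _ h0) (Ideal.mul_mem_left _ _ h4)
      · exact Ideal.mul_mem_right _ _ h0
      · exact Ideal.mul_mem_right _ _ h2
      · exact Ideal.mul_mem_right _ _ h4
    exact Ideal.mem_map_of_mem f this
  · rw [Ideal.map_le_iff_le_comap, Ideal.span_le]
    intro p hp
    simp only [Set.mem_insert_iff, Set.mem_singleton_iff] at hp
    rcases hp with rfl | rfl | rfl
    · exact key _ (Ideal.subset_span (by simp))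
    · exact key _ (Ideal.subset_span (by simp))
    · exact key _ (Ideal.subset_span (by simp))
end

section
/- Let K be a field and J = (X_1X_4 - X_2X_3, X_3X_6 - X_4X_5, X_1X_6 - X_2X_5, X_1X_7, X_3X_7, X_5X_7) in K[X_1,...,X_7]. Then √J = √(X_1X_4 - X_2X_3, X_3X_6 - X_4X_5, X_1X_6 - X_2X_5 + X_3X_7, X_1X_7, X_5X_7); in particular the zero set of J in K^7 is cut out by these 5 polynomials. -/
open MvPolynomial

/-- For `J = (X₁X₄ - X₂X₃, X₃X₆ - X₄X₅, X₁X₆ - X₂X₅, X₁X₇, X₃X₇, X₅X₇)` in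
`K[X₁,...,X₇]`, one has
`√J = √(X₁X₄ - X₂X₃, X₃X₆ - X₄X₅, X₁X₆ - X₂X₅ + X₃X₇, X₁X₇, X₅X₇)`:
the zero set of `J` is cut out by these five polynomials. -/
theorem J_five_equations (K : Type*) [Field K] :
    (Ideal.span ({X 0 * X 3 - X 1 * X 2, X 2 * X 5 - X 3 * X 4,
        X 0 * X 5 - X 1 * X 4, X 0 * X 6, X 2 * X 6, X 4 * X 6} :
          Set (MvPolynomial (Fin 7) K))).radical =
      (Ideal.span ({X 0 * X 3 - X 1 * X 2, X 2 * X 5 - X 3 * X 4,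
        X 0 * X 5 - X 1 * X 4 + X 2 * X 6, X 0 * X 6, X 4 * X 6} :
          Set (MvPolynomial (Fin 7) K))).radical := by
  set J5 : Ideal (MvPolynomial (Fin 7) K) :=
    Ideal.span ({X 0 * X 3 - X 1 * X 2, X 2 * X 5 - X 3 * X 4,
        X 0 * X 5 - X 1 * X 4 + X 2 * X 6, X 0 * X 6, X 4 * X 6} :
          Set (MvPolynomial (Fin 7) K)) with hJ5
  have mem5 : ∀ p ∈ ({X 0 * X 3 - X 1 * X 2, X 2 * X 5 - X 3 * X 4,
        X 0 * X 5 - X 1 * X 4 + X 2 * X 6, X 0 * X 6, X 4 * X 6} :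
          Set (MvPolynomial (Fin 7) K)), p ∈ J5 := fun p hp => Ideal.subset_span hp
  -- X 2 * X 6 is in the radical of J5
  have hsq : (X 2 * X 6 : MvPolynomial (Fin 7) K) ^ 2 ∈ J5 := by
    have hid : (X 2 * X 6 : MvPolynomial (Fin 7) K) ^ 2 =
        (X 2 * X 6) * (X 0 * X 5 - X 1 * X 4 + X 2 * X 6)
          - X 2 * X 5 * (X 0 * X 6) + X 1 * X 2 * (X 4 * X 6) := by ring
    rw [hid]
    exact add_mem (sub_mem (Ideal.mul_mem_left _ _ (mem5 _ (by simp)))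
        (Ideal.mul_mem_left _ _ (mem5 _ (by simp))))
      (Ideal.mul_mem_left _ _ (mem5 _ (by simp)))
  have h26 : (X 2 * X 6 : MvPolynomial (Fin 7) K) ∈ J5.radical := ⟨2, hsq⟩
  apply le_antisymm
  · -- √J ≤ √J5 : show each generator of J lies in √J5
    have h1 : Ideal.span ({X 0 * X 3 - X 1 * X 2, X 2 * X 5 - X 3 * X 4,
        X 0 * X 5 - X 1 * X 4, X 0 * X 6, X 2 * X 6, X 4 * X 6} :
          Set (MvPolynomial (Fin 7) K)) ≤ J5.radical := by
      rw [Ideal.span_le]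
      rintro p (rfl | rfl | rfl | rfl | rfl | rfl)
      · exact Ideal.le_radical (mem5 _ (by simp))
      · exact Ideal.le_radical (mem5 _ (by simp))
      · have : (X 0 * X 5 - X 1 * X 4 : MvPolynomial (Fin 7) K) =
            (X 0 * X 5 - X 1 * X 4 + X 2 * X 6) - X 2 * X 6 := by ring
        rw [this]
        exact sub_mem (Ideal.le_radical (mem5 _ (by simp))) h26
      · exact Ideal.le_radical (mem5 _ (by simp))
      · exact h26
      · exact Ideal.le_radical (mem5 _ (by simp))
    calc (Ideal.span _).radical ≤ J5.radical.radical := Ideal.radical_mono h1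
      _ = J5.radical := Ideal.radical_idem _
  · -- √J5 ≤ √J : J5 ≤ J
    apply Ideal.radical_mono
    rw [Ideal.span_le]
    rintro p (rfl | rfl | rfl | rfl | rfl)
    · exact Ideal.subset_span (by simp)
    · exact Ideal.subset_span (by simp)
    · exact add_mem (Ideal.subset_span (by simp)) (Ideal.subset_span (by simp))
    · exact Ideal.subset_span (by simp)
    · exact Ideal.subset_span (by simp)
end

section
/- Let K be a field and let x_1, x_2, x_3 ∈ K satisfy the rational normal cubic curve relations: x_1x_3 = x_2^2 (where we write the scroll relations for c = 2). More generally, for a point (x_1,...,x_{c+1}) ∈ K^{c+1}: if F_j(x) = Σ_{k=0}^{j} (−1)^k C(j,k) x_{j+2}^{j−k} x_{k+1} x_{j+1}^k = 0 for all j = 1,...,c−1, then all 2-minors x_j x_{j'+1} − x_{j'} x_{j+1} (1 ≤ j < j' ≤ c) vanish. -/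
private lemma geom_sum_eq' (K : Type*) [Field K] (n : ℕ) (t a y : K) :
    ∑ k ∈ Finset.range (n + 1),
      (-1 : K) ^ k * (n.choose k : K) * y ^ (n - k) * (t ^ k * a) * (t ^ n * a) ^ k
      = a * (y - t ^ (n + 1) * a) ^ n := by
  rw [show y - t ^ (n+1) * a = -(t ^ (n+1) * a) + y from by ring, add_pow, Finset.mul_sum]
  refine Finset.sum_congr rfl fun k hk => ?_
  ring

/-- Let `K` be an algebraically closed field and `x 1, ..., x (c+1) ∈ K`. If
`F j = ∑_{k=0}^{j} (-1)^k C(j,k) x(j+2)^(j-k) x(k+1) x(j+1)^k` vanishes for all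
`j = 1, ..., c-1`, then all `2×2` minors `x j * x (j'+1) - x j' * x (j+1)`
(for `1 ≤ j < j' ≤ c`) of the Hankel matrix with rows `(x 1, ..., x c)` and
`(x 2, ..., x (c+1))` vanish. -/
theorem F_vanish_implies_minors_vanish (K : Type*) [Field K] [IsAlgClosed K]
    (c : ℕ) (x : ℕ → K)
    (hF : ∀ j, 1 ≤ j → j ≤ c - 1 →
      ∑ k ∈ Finset.range (j + 1),
        (-1 : K) ^ k * (j.choose k : K) * x (j + 2) ^ (j - k) * x (k + 1) * x (j + 1) ^ k
          = 0) :
    ∀ j j', 1 ≤ j → j < j' → j' ≤ c →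
      x j * x (j' + 1) - x j' * x (j + 1) = 0 := by
  induction c with
  | zero => intro j j' h1 h2 h3; omega
  | succ n ih =>
    have hprev : ∀ j j', 1 ≤ j → j < j' → j' ≤ n →
        x j * x (j' + 1) - x j' * x (j + 1) = 0 :=
      ih (fun j hj1 hj2 => hF j hj1 (by omega))
    intro j j' h1 h2 h3
    by_cases hle : j' ≤ n
    · exact hprev j j' h1 h2 hle
    have hj' : j' = n + 1 := by omega
    subst hj'
    have hjn : j ≤ n := by omega
    by_cases hn1 : n = 1
    · subst hn1
      have hj1 : j = 1 := by omega
      subst hj1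
      have h := hF 1 (by omega) (by omega)
      simp [Finset.sum_range_succ] at h
      linear_combination h
    have hn2 : 2 ≤ n := by omega
    by_cases hmid : ∀ i, 2 ≤ i → i ≤ n → x i = 0
    · -- Case B: middle entries vanish
      have hx1n : x 1 * x (n + 1) = 0 := by
        have h := hprev 1 n le_rfl (by omega) le_rfl
        have hxn : x n = 0 := hmid n hn2 le_rfl
        linear_combination h + x 2 * hxn
      have hFn := hF n (by omega) (by omega)
      rw [Finset.sum_range_succ] at hFn
      rw [Finset.sum_eq_single 0 (fun k hk hk0 => by
            have hz : x (k + 1) = 0 := hmid (k + 1) (by omega) (by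
              have := Finset.mem_range.mp hk; omega)
            simp [hz])
          (fun h => absurd (Finset.mem_range.mpr (by omega)) h)] at hFn
      simp at hFn
      -- hFn should now say: x (n+2)^n * x 1 + (-1)^n * x (n+1) * x (n+1)^n = 0 (shape tbd)
      have hsum : x 1 * x (n + 2) ^ n + (-1 : K) ^ n * x (n + 1) ^ (n + 1) = 0 := by
        linear_combination hFn
      have hxn1 : x (n + 1) = 0 := by
        have h2 : (-1 : K) ^ n * x (n + 1) ^ (n + 2) = 0 := by
          linear_combination x (n + 1) * hsum - x (n + 2) ^ n * hx1n
        have h3 : x (n + 1) ^ (n + 2) = 0 := by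
          rcases mul_eq_zero.mp h2 with h | h
          · exact absurd h (pow_ne_zero _ (by norm_num))
          · exact h
        exact pow_eq_zero_iff (by omega) |>.mp h3
      have h5 : x 1 * x (n + 2) ^ n = 0 := by
        rw [hxn1] at hsum
        simpa [zero_pow (show n + 1 ≠ 0 by omega)] using hsum
      rw [hxn1]
      by_cases hj1 : j = 1
      · subst hj1
        rcases mul_eq_zero.mp h5 with h | h
        · rw [h]; ring
        · rw [pow_eq_zero_iff (by omega) |>.mp h]; ring
      · have hxj : x j = 0 := hmid j (by omega) hjn
        rw [hxj]; ring
    · -- Case A: geometric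
      push_neg at hmid
      obtain ⟨i, hi2, hin, hxi⟩ := hmid
      set t : K := x (i + 1) / x i with ht
      have hstep : ∀ a, 1 ≤ a → a ≤ n → x (a + 1) = t * x a := by
        intro a ha1 han
        rcases lt_trichotomy a i with h | h | h
        · have hm := hprev a i ha1 h hin
          rw [ht, div_mul_eq_mul_div, eq_div_iff hxi]
          linear_combination -hm
        · subst h
          rw [ht, div_mul_cancel₀ _ hxi]
        · have hm := hprev i a (by omega) h han
          rw [ht, div_mul_eq_mul_div, eq_div_iff hxi]
          linear_combination hm
      have hgeo : ∀ a, 1 ≤ a → a ≤ n + 1 → x a = t ^ (a - 1) * x 1 := by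
        intro a
        induction a with
        | zero => omega
        | succ m ihm =>
          intro _ hm
          rcases Nat.eq_zero_or_pos m with hm0 | hm1
          · subst hm0; simp
          · rw [hstep m hm1 (by omega), ihm hm1 (by omega),
              show m + 1 - 1 = m from rfl]
            have e : t ^ m = t * t ^ (m - 1) := by
              conv_lhs => rw [show m = (m - 1) + 1 from by omega]
              rw [pow_succ]; ring
            rw [e]; ring
      have hx1 : x 1 ≠ 0 := by
        intro h
        exact hxi (by rw [hgeo i (by omega) (by omega), h, mul_zero])
      have hFn := hF n (by omega) (by omega)
      have hsum : x 1 * (x (n + 2) - t ^ (n + 1) * x 1) ^ n = 0 := by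
        rw [← geom_sum_eq' K n t (x 1) (x (n + 2)), ← hFn]
        refine Finset.sum_congr rfl fun k hk => ?_
        rw [hgeo (k + 1) (by omega) (by have := Finset.mem_range.mp hk; omega),
          hgeo (n + 1) (by omega) le_rfl]
        simp
      have h4 : x (n + 2) = t ^ (n + 1) * x 1 := by
        rcases mul_eq_zero.mp hsum with h | h
        · exact absurd h hx1
        · have := pow_eq_zero_iff (show n ≠ 0 by omega) |>.mp h
          linear_combination this
      obtain ⟨m, rfl⟩ : ∃ m, j = m + 1 := ⟨j - 1, by omega⟩
      rw [show n + 1 + 1 = n + 2 from rfl, h4,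
        hgeo (m + 1) (by omega) (by omega),
        hgeo (m + 1 + 1) (by omega) (by omega),
        hgeo (n + 1) (by omega) le_rfl]
      simp only [Nat.add_sub_cancel]
      ring
end
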